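/- Let K be a field and B a nonzero commutative K-algebra such that the multiplication map B ⊗_K B → B is an isomorphism. Then the structure map K → B is bijective. -/

import Mathlib

theorem stmt8 (K : Type*) [Field K] (B : Type*) [CommRing B] [Nontrivial B] [Algebra K B]
    (hmul : Function.Bijective (LinearMap.mul' K B)) :
    Function.Bijective (algebraMap K B) := by
  constructor
  · exact (algebraMap K B).injective
  · -- construct a K-linear functional f : B → K with f 1 = 1
    have h1 : (1 : B) ≠ 0 := one_ne_zero
    let e := (LinearEquiv.toSpanNonzeroSingleton K B 1 h1).symm
    obtain ⟨f, hf⟩ := LinearMap.exists_extend (e.toLinearMap)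
    have hf1 : f 1 = 1 := by
      have h2 := congrFun (congrArg DFunLike.coe hf)
        ⟨1, Submodule.mem_span_singleton_self 1⟩
      simp at h2
      rw [show (1 : B) = ((⟨1, Submodule.mem_span_singleton_self 1⟩ :
        Submodule.span K {(1:B)}) : B) from rfl, h2]
      show (LinearEquiv.toSpanNonzeroSingleton K B 1 h1).symm _ = 1
      rw [LinearEquiv.symm_apply_eq]
      ext
      simp [LinearEquiv.toSpanNonzeroSingleton, LinearEquiv.ofInjective,
        LinearEquiv.ofLeftInverse, LinearMap.toSpanSingleton]
      exact (one_smul K (1:B)).symm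
    intro b
    refine ⟨f b, ?_⟩
    have heq : (b ⊗ₜ[K] (1:B)) = ((1:B) ⊗ₜ[K] b) := by
      apply hmul.injective
      simp [LinearMap.mul'_apply]
    have := congrArg (TensorProduct.lift ((LinearMap.lsmul K B).comp f)) heq
    simpa [hf1, Algebra.algebraMap_eq_smul_one] using this
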